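/- Let F : [0,1] → Matrix (Fin k) (Fin k) ℝ be continuously differentiable and symmetric-valued with F(t₀) ≥ 0 (positive semidefinite) for some t₀ in [0,1], and suppose F'(t) ≥ -F(t) B(t) - B(t)ᵀ F(t) for all t, where B : [0,1] → Matrix (Fin k) (Fin k) ℝ is continuous. Then F(t) ≥ 0 for all t in [t₀, 1]. -/

import Mathlib

open Matrix Set Filter Topology

set_option maxHeartbeats 1600000 in
theorem matrix_linear_comparison (k : ℕ)
    (F F' B : ℝ → Matrix (Fin k) (Fin k) ℝ)
    (hderiv : ∀ t ∈ Icc (0:ℝ) 1, ∀ i j,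
      HasDerivWithinAt (fun s => F s i j) (F' t i j) (Icc 0 1) t)
    (hF'cont : ∀ i j, ContinuousOn (fun t => F' t i j) (Icc 0 1))
    (hBcont : ∀ i j, ContinuousOn (fun t => B t i j) (Icc 0 1))
    (hsymm : ∀ t ∈ Icc (0:ℝ) 1, (F t).IsSymm)
    (t₀ : ℝ) (ht₀ : t₀ ∈ Icc (0:ℝ) 1)
    (hinit : (F t₀).PosSemidef)
    (hineq : ∀ t ∈ Icc (0:ℝ) 1, (F' t + F t * B t + (B t)ᵀ * F t).PosSemidef) :
    ∀ t ∈ Icc t₀ 1, (F t).PosSemidef := by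
  -- basic facts
  have hdp_nonneg : ∀ v : Fin k → ℝ, (0:ℝ) ≤ v ⬝ᵥ v := fun v => by
    simpa [dotProduct] using Finset.sum_nonneg fun i _ => mul_self_nonneg (v i)
  have hdp_pos : ∀ v : Fin k → ℝ, v ≠ 0 → 0 < v ⬝ᵥ v := by
    intro v hv
    rcases (hdp_nonneg v).lt_or_eq with h2 | h2
    · exact h2
    · exact absurd (dotProduct_self_eq_zero.mp h2.symm) hv
  have hsub : Icc t₀ 1 ⊆ Icc (0:ℝ) 1 := Icc_subset_Icc ht₀.1 le_rfl
  have hFcont : ∀ i j, ContinuousOn (fun t => F t i j) (Icc 0 1) :=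
    fun i j t ht => (hderiv t ht i j).continuousWithinAt
  -- a bound on the entries of B
  obtain ⟨M₀, hM₀nn, hM₀⟩ : ∃ M₀ : ℝ, 0 ≤ M₀ ∧ ∀ t ∈ Icc (0:ℝ) 1, ∀ i j, |B t i j| ≤ M₀ := by
    have hbnd : ∀ i j : Fin k, ∃ C : ℝ, ∀ t ∈ Icc (0:ℝ) 1, |B t i j| ≤ C := by
      intro i j
      obtain ⟨C, hC⟩ := isCompact_Icc.exists_bound_of_continuousOn (hBcont i j)
      exact ⟨C, fun t ht => by simpa [Real.norm_eq_abs] using hC t ht⟩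
    choose Cb hCb using hbnd
    refine ⟨∑ i, ∑ j, max (Cb i j) 0,
      Finset.sum_nonneg fun i _ => Finset.sum_nonneg fun j _ => le_max_right _ _,
      fun t ht i j => ?_⟩
    have ha : |B t i j| ≤ max (Cb i j) 0 := le_trans (hCb i j t ht) (le_max_left _ _)
    have hb : max (Cb i j) 0 ≤ ∑ j', max (Cb i j') 0 :=
      Finset.single_le_sum (f := fun j' => max (Cb i j') 0)
        (fun j' _ => le_max_right _ _) (Finset.mem_univ j)
    have hc' : (∑ j', max (Cb i j') 0) ≤ ∑ i', ∑ j', max (Cb i' j') 0 :=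
      Finset.single_le_sum (f := fun i' => ∑ j', max (Cb i' j') 0)
        (fun i' _ => Finset.sum_nonneg fun j' _ => le_max_right _ _) (Finset.mem_univ i)
    exact le_trans ha (le_trans hb hc')
  set c : ℝ := M₀ * k with hc_def
  have hc_nn : 0 ≤ c := mul_nonneg hM₀nn (Nat.cast_nonneg k)
  -- quadratic-form bound for B
  have hBq : ∀ t ∈ Icc (0:ℝ) 1, ∀ v : Fin k → ℝ, |v ⬝ᵥ (B t) *ᵥ v| ≤ c * (v ⬝ᵥ v) := by
    intro t ht v
    have h1 : |v ⬝ᵥ (B t) *ᵥ v| ≤ M₀ * (∑ i, |v i|) ^ 2 := by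
      calc |v ⬝ᵥ (B t) *ᵥ v| = |∑ i, v i * ∑ j, B t i j * v j| := by
            simp [dotProduct, Matrix.mulVec]
        _ ≤ ∑ i, |v i * ∑ j, B t i j * v j| := Finset.abs_sum_le_sum_abs _ _
        _ ≤ ∑ i, ∑ j, M₀ * (|v i| * |v j|) := by
            refine Finset.sum_le_sum fun i _ => ?_
            rw [abs_mul]
            calc |v i| * |∑ j, B t i j * v j| ≤ |v i| * ∑ j, M₀ * |v j| := by
                  refine mul_le_mul_of_nonneg_left ?_ (abs_nonneg _)
                  refine (Finset.abs_sum_le_sum_abs _ _).trans (Finset.sum_le_sum fun j _ => ?_)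
                  rw [abs_mul]
                  exact mul_le_mul_of_nonneg_right (hM₀ t ht i j) (abs_nonneg _)
              _ = ∑ j, M₀ * (|v i| * |v j|) := by
                  rw [Finset.mul_sum]; exact Finset.sum_congr rfl fun j _ => by ring
        _ = M₀ * (∑ i, |v i|) ^ 2 := by
            rw [sq, Finset.sum_mul_sum, Finset.mul_sum]
            exact Finset.sum_congr rfl fun i _ => by
              rw [Finset.mul_sum]
    have h2 : (∑ i, |v i|) ^ 2 ≤ (k : ℝ) * (v ⬝ᵥ v) := by
      have := sq_sum_le_card_mul_sum_sq (s := (Finset.univ : Finset (Fin k)))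
        (f := fun i => |v i|)
      simpa [dotProduct, sq_abs, sq, Finset.card_univ] using this
    calc |v ⬝ᵥ (B t) *ᵥ v| ≤ M₀ * (∑ i, |v i|) ^ 2 := h1
      _ ≤ M₀ * ((k : ℝ) * (v ⬝ᵥ v)) := mul_le_mul_of_nonneg_left h2 hM₀nn
      _ = c * (v ⬝ᵥ v) := by rw [hc_def]; ring
  set Cc : ℝ := 2 * c + 1 with hCc_def
  -- KEY claim
  have KEY : ∀ ε : ℝ, 0 < ε → ∀ t ∈ Icc t₀ 1, ∀ v : Fin k → ℝ,
      0 ≤ v ⬝ᵥ (F t) *ᵥ v + (ε * Real.exp (Cc * (t - t₀))) * (v ⬝ᵥ v) := by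
    intro ε hε
    set φ : ℝ → ℝ := fun s => ε * Real.exp (Cc * (s - t₀)) with hφ_def
    have hφpos : ∀ s, 0 < φ s := fun s => mul_pos hε (Real.exp_pos _)
    set E : ℝ → Matrix (Fin k) (Fin k) ℝ := fun s => F s + φ s • (1 : Matrix (Fin k) (Fin k) ℝ)
      with hE_def
    have hEq : ∀ s (v : Fin k → ℝ), v ⬝ᵥ (E s) *ᵥ v = v ⬝ᵥ (F s) *ᵥ v + φ s * (v ⬝ᵥ v) := by
      intro s v
      simp [hE_def, Matrix.add_mulVec, Matrix.smul_mulVec, dotProduct_add,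
        dotProduct_smul, smul_eq_mul]
    by_contra hbad
    push_neg at hbad
    obtain ⟨t₁, ht₁, v₁, hv₁⟩ := hbad
    set bad : Set ℝ := {t | t ∈ Icc t₀ 1 ∧ ∃ v : Fin k → ℝ, v ⬝ᵥ (E t) *ᵥ v < 0} with hbad_def
    have ht₁bad : t₁ ∈ bad := ⟨ht₁, v₁, by rw [hEq]; exact hv₁⟩
    have hbad_ne : bad.Nonempty := ⟨t₁, ht₁bad⟩
    have hbad_bdd : BddBelow bad := ⟨t₀, fun x hx => hx.1.1⟩
    set T : ℝ := sInf bad with hT_def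
    have hT_mem : T ∈ Icc t₀ 1 :=
      ⟨le_csInf hbad_ne fun x hx => hx.1.1, le_trans (csInf_le hbad_bdd ht₁bad) ht₁.2⟩
    have hT01 : T ∈ Icc (0:ℝ) 1 := hsub hT_mem
    -- all times in [t₀, T) are good
    have hgood : ∀ s, t₀ ≤ s → s < T → ∀ v : Fin k → ℝ, 0 ≤ v ⬝ᵥ (E s) *ᵥ v := by
      intro s hs1 hs2 v
      by_contra hneg
      push_neg at hneg
      have : s ∈ bad := ⟨⟨hs1, le_of_lt (lt_of_lt_of_le hs2 hT_mem.2)⟩, v, hneg⟩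
      exact absurd (csInf_le hbad_bdd this) (not_le.mpr hs2)
    -- bad times converging to T from above
    have hseq : ∀ n : ℕ, ∃ t, t ∈ bad ∧ t < T + 1 / (n + 1) := by
      intro n
      have hpos : (0:ℝ) < 1 / (n + 1) := by positivity
      obtain ⟨t, ht, hlt⟩ := exists_lt_of_csInf_lt hbad_ne
        (show sInf bad < T + 1 / (n + 1) by rw [← hT_def]; linarith)
      exact ⟨t, ht, hlt⟩
    choose tseq htseq_bad htseq_lt using hseq
    have htseq_ge : ∀ n, T ≤ tseq n := fun n => csInf_le hbad_bdd (htseq_bad n)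
    have htseq_tendsto : Tendsto tseq atTop (𝓝 T) := by
      refine tendsto_of_tendsto_of_tendsto_of_le_of_le (g := fun _ : ℕ => T)
        (h := fun n : ℕ => T + 1 / (n + 1)) tendsto_const_nhds ?_ htseq_ge
        (fun n => (htseq_lt n).le)
      simpa using (tendsto_const_nhds (x := T)).add tendsto_one_div_add_atTop_nhds_zero_nat
    -- bad unit vectors
    have hvec : ∀ n : ℕ, ∃ w : Fin k → ℝ, ‖w‖ = 1 ∧ w ⬝ᵥ (E (tseq n)) *ᵥ w < 0 := by
      intro n
      obtain ⟨_, v, hv⟩ := htseq_bad n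
      have hv0 : v ≠ 0 := by
        rintro rfl; simp at hv
      refine ⟨‖v‖⁻¹ • v, ?_, ?_⟩
      · rw [norm_smul, norm_inv, norm_norm, inv_mul_cancel₀ (norm_ne_zero_iff.mpr hv0)]
      · have hexp : (‖v‖⁻¹ • v) ⬝ᵥ (E (tseq n)) *ᵥ (‖v‖⁻¹ • v)
            = ‖v‖⁻¹ * (‖v‖⁻¹ * (v ⬝ᵥ (E (tseq n)) *ᵥ v)) := by
          rw [Matrix.mulVec_smul, smul_dotProduct, dotProduct_smul]
          simp [smul_eq_mul]
        rw [hexp]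
        have hinv : 0 < ‖v‖⁻¹ := inv_pos.mpr (norm_pos_iff.mpr hv0)
        exact mul_neg_of_pos_of_neg hinv (mul_neg_of_pos_of_neg hinv hv)
    choose wseq hwseq_norm hwseq_neg using hvec
    have hwmem : ∀ n, wseq n ∈ Metric.sphere (0 : Fin k → ℝ) 1 := by
      intro n; simpa [mem_sphere_iff_norm] using hwseq_norm n
    obtain ⟨w, hw_mem, ψ, hψ_mono, hψ_tendsto⟩ :=
      (isCompact_sphere (0 : Fin k → ℝ) 1).tendsto_subseq hwmem
    have hw_norm : ‖w‖ = 1 := by simpa [mem_sphere_iff_norm] using hw_mem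
    have hw0 : w ≠ 0 := by intro h; rw [h, norm_zero] at hw_norm; norm_num at hw_norm
    -- continuity of entries of E
    have hφcont : Continuous φ := by
      rw [hφ_def]
      exact continuous_const.mul (Real.continuous_exp.comp
        (continuous_const.mul (continuous_id.sub continuous_const)))
    have hEcont : ∀ i j, ContinuousOn (fun t => E t i j) (Icc 0 1) := by
      intro i j
      have h2 : ContinuousOn (fun t => F t i j + φ t * (1 : Matrix (Fin k) (Fin k) ℝ) i j)
          (Icc 0 1) := (hFcont i j).add (hφcont.continuousOn.mul continuousOn_const)
      simpa [hE_def, Matrix.add_apply, Matrix.smul_apply, smul_eq_mul] using h2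
    -- limit of the quadratic forms
    have hlim : Tendsto (fun n => (wseq (ψ n)) ⬝ᵥ (E (tseq (ψ n))) *ᵥ (wseq (ψ n)))
        atTop (𝓝 (w ⬝ᵥ (E T) *ᵥ w)) := by
      have hG : ContinuousOn (fun p : ℝ × (Fin k → ℝ) => p.2 ⬝ᵥ (E p.1) *ᵥ p.2)
          ((Icc (0:ℝ) 1) ×ˢ (univ : Set (Fin k → ℝ))) := by
        have hrw : ∀ p : ℝ × (Fin k → ℝ), p.2 ⬝ᵥ (E p.1) *ᵥ p.2
            = ∑ i, ∑ j, p.2 i * (E p.1 i j * p.2 j) := by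
          intro p; simp [dotProduct, Matrix.mulVec, Finset.mul_sum]
        rw [show (fun p : ℝ × (Fin k → ℝ) => p.2 ⬝ᵥ (E p.1) *ᵥ p.2)
            = fun p => ∑ i, ∑ j, p.2 i * (E p.1 i j * p.2 j) from funext hrw]
        refine continuousOn_finset_sum _ fun i _ => continuousOn_finset_sum _ fun j _ => ?_
        refine ContinuousOn.mul ?_ (ContinuousOn.mul ?_ ?_)
        · exact ((continuous_apply i).comp continuous_snd).continuousOn
        · exact (hEcont i j).comp continuous_fst.continuousOn fun p hp => hp.1
        · exact ((continuous_apply j).comp continuous_snd).continuousOn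
      have hmemT : (T, w) ∈ (Icc (0:ℝ) 1) ×ˢ (univ : Set (Fin k → ℝ)) := ⟨hT01, mem_univ _⟩
      have hpair : Tendsto (fun n => (tseq (ψ n), wseq (ψ n))) atTop
          (𝓝[(Icc (0:ℝ) 1) ×ˢ (univ : Set (Fin k → ℝ))] (T, w)) := by
        refine tendsto_nhdsWithin_of_tendsto_nhds_of_eventually_within _ ?_ ?_
        · exact ((htseq_tendsto.comp hψ_mono.tendsto_atTop).prodMk_nhds hψ_tendsto)
        · exact Eventually.of_forall fun n => ⟨hsub (htseq_bad (ψ n)).1, mem_univ _⟩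
      exact ((hG (T, w) hmemT).tendsto.comp hpair)
    have hQT_le : w ⬝ᵥ (E T) *ᵥ w ≤ 0 :=
      le_of_tendsto hlim (Eventually.of_forall fun n => (hwseq_neg (ψ n)).le)
    -- E T is positive semidefinite
    have hTform : ∀ x : Fin k → ℝ, 0 ≤ x ⬝ᵥ (E T) *ᵥ x := by
      intro x
      rcases eq_or_lt_of_le hT_mem.1 with heq | hlt
      · rw [hEq, ← heq]
        have h1 : 0 ≤ x ⬝ᵥ (F t₀) *ᵥ x := by simpa using hinit.dotProduct_mulVec_nonneg x
        have h2 : 0 ≤ φ t₀ * (x ⬝ᵥ x) := mul_nonneg (hφpos t₀).le (hdp_nonneg x)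
        linarith
      · have hcont : ContinuousWithinAt (fun s => x ⬝ᵥ (E s) *ᵥ x) (Ico t₀ T) T := by
          have h1 : ContinuousOn (fun s => x ⬝ᵥ (E s) *ᵥ x) (Icc 0 1) := by
            have hrw : ∀ s, x ⬝ᵥ (E s) *ᵥ x = ∑ i, ∑ j, x i * (E s i j * x j) := by
              intro s; simp [dotProduct, Matrix.mulVec, Finset.mul_sum]
            rw [funext hrw]
            exact continuousOn_finset_sum _ fun i _ => continuousOn_finset_sum _ fun j _ =>
              continuousOn_const.mul ((hEcont i j).mul continuousOn_const)
          exact (h1 T hT01).mono (fun s hs => ⟨le_trans ht₀.1 hs.1, le_trans hs.2.le hT01.2⟩)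
        haveI : Filter.NeBot (𝓝[Ico t₀ T] T) := right_nhdsWithin_Ico_neBot hlt
        exact ge_of_tendsto hcont
          (eventually_mem_nhdsWithin.mono fun s hs => hgood s hs.1 hs.2 x)
    have hTpsd : (E T).PosSemidef := by
      refine Matrix.PosSemidef.of_dotProduct_mulVec_nonneg ?_ ?_
      · rw [Matrix.IsHermitian, Matrix.conjTranspose_eq_transpose_of_trivial, hE_def]
        simp only [Matrix.transpose_add, Matrix.transpose_smul, Matrix.transpose_one]
        rw [(hsymm T hT01).eq]
      · intro x; simpa using hTform x
    have hQT : w ⬝ᵥ (E T) *ᵥ w = 0 := le_antisymm hQT_le (hTform w)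
    -- T > t₀
    have hTgt : t₀ < T := by
      rcases eq_or_lt_of_le hT_mem.1 with heq | hlt
      · exfalso
        rw [hEq, ← heq] at hQT
        have h1 : 0 ≤ w ⬝ᵥ (F t₀) *ᵥ w := by simpa using hinit.dotProduct_mulVec_nonneg w
        have h2 : 0 < φ t₀ * (w ⬝ᵥ w) := mul_pos (hφpos t₀) (hdp_pos w hw0)
        linarith
      · exact hlt
    -- the kernel vector
    have hker : (E T) *ᵥ w = 0 := (hTpsd.dotProduct_mulVec_zero_iff w).mp (by simpa using hQT)
    have hFw : (F T) *ᵥ w = (-(φ T)) • w := by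
      have h0 : (F T) *ᵥ w + φ T • w = 0 := by
        have h1 := hker
        rw [hE_def] at h1
        simpa [Matrix.add_mulVec, Matrix.smul_mulVec] using h1
      funext i
      have := congrFun h0 i
      simp only [Pi.add_apply, Pi.smul_apply, smul_eq_mul, Pi.zero_apply, Pi.neg_apply,
        neg_smul] at this ⊢
      linarith
    -- the scalar function g
    set q : ℝ := w ⬝ᵥ w with hq_def
    have hq_pos : 0 < q := hdp_pos w hw0
    set g : ℝ → ℝ := fun s => w ⬝ᵥ (F s) *ᵥ w + φ s * q with hg_def
    have hgE : ∀ s, g s = w ⬝ᵥ (E s) *ᵥ w := fun s => (hEq s w).symm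
    set g' : ℝ := w ⬝ᵥ (F' T) *ᵥ w + (ε * (Real.exp (Cc * (T - t₀)) * Cc)) * q with hg'_def
    have hgderiv : HasDerivWithinAt g g' (Icc 0 1) T := by
      have h1 : HasDerivWithinAt (fun s => w ⬝ᵥ (F s) *ᵥ w) (w ⬝ᵥ (F' T) *ᵥ w) (Icc 0 1) T := by
        have hrw : ∀ s, w ⬝ᵥ (F s) *ᵥ w = ∑ i, ∑ j, w i * (F s i j * w j) := by
          intro s; simp [dotProduct, Matrix.mulVec, Finset.mul_sum]
        have hrw' : w ⬝ᵥ (F' T) *ᵥ w = ∑ i, ∑ j, w i * (F' T i j * w j) := by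
          simp [dotProduct, Matrix.mulVec, Finset.mul_sum]
        rw [funext hrw, hrw']
        refine HasDerivWithinAt.fun_sum fun i _ => HasDerivWithinAt.fun_sum fun j _ => ?_
        exact ((hderiv T hT01 i j).mul_const (w j)).const_mul (w i)
      have h2 : HasDerivWithinAt (fun s => φ s * q)
          ((ε * (Real.exp (Cc * (T - t₀)) * Cc)) * q) (Icc 0 1) T := by
        have hexp : HasDerivAt (fun s : ℝ => Real.exp (Cc * (s - t₀)))
            (Real.exp (Cc * (T - t₀)) * Cc) T := by
          have hlin : HasDerivAt (fun s : ℝ => Cc * (s - t₀)) Cc T := by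
            simpa using ((hasDerivAt_id T).sub_const t₀).const_mul Cc
          simpa using hlin.exp
        exact (((hexp.const_mul ε).mul_const q).hasDerivWithinAt)
      simpa [hg_def, hφ_def, hg'_def] using h1.fun_add h2
    have hgT : g T = 0 := by rw [hgE]; exact hQT
    -- the right-endpoint minimum gives g' ≤ 0
    have hg'_nonpos : g' ≤ 0 := by
      have hd : HasDerivWithinAt g g' (Icc t₀ T) T :=
        hgderiv.mono (fun s hs => ⟨le_trans ht₀.1 hs.1, le_trans hs.2 hT01.2⟩)
      rw [hasDerivWithinAt_iff_tendsto_slope] at hd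
      rw [show Icc t₀ T \ {T} = Ico t₀ T from Icc_sdiff_right] at hd
      haveI : Filter.NeBot (𝓝[Ico t₀ T] T) := right_nhdsWithin_Ico_neBot hTgt
      refine le_of_tendsto hd (eventually_mem_nhdsWithin.mono fun s hs => ?_)
      rw [slope_def_field]
      have hgs : 0 ≤ g s := by rw [hgE]; exact hgood s hs.1 hs.2 w
      exact div_nonpos_of_nonneg_of_nonpos (by rw [hgT]; linarith) (by linarith [hs.2])
    -- lower bound on g' : contradiction
    have hineqT := hineq T hT01
    have hF'w : 0 ≤ w ⬝ᵥ (F' T) *ᵥ w + 2 * (-(φ T)) * (w ⬝ᵥ (B T) *ᵥ w) := by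
      have h0 : 0 ≤ w ⬝ᵥ (F' T + F T * B T + (B T)ᵀ * F T) *ᵥ w := by simpa using hineqT.dotProduct_mulVec_nonneg w
      have hsymmT : (F T)ᵀ = F T := (hsymm T hT01).eq
      have e1 : w ⬝ᵥ (F T * B T) *ᵥ w = (-(φ T)) * (w ⬝ᵥ (B T) *ᵥ w) := by
        rw [← Matrix.mulVec_mulVec, Matrix.dotProduct_mulVec w (F T), ← Matrix.mulVec_transpose,
          hsymmT, hFw]
        simp [smul_dotProduct, smul_eq_mul]
      have e2 : w ⬝ᵥ ((B T)ᵀ * F T) *ᵥ w = (-(φ T)) * (w ⬝ᵥ (B T) *ᵥ w) := by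
        rw [← Matrix.mulVec_mulVec, hFw, Matrix.mulVec_smul, dotProduct_smul,
          smul_eq_mul]
        congr 1
        rw [Matrix.mulVec_transpose, dotProduct_comm, ← Matrix.dotProduct_mulVec]
      rw [Matrix.add_mulVec, Matrix.add_mulVec, dotProduct_add, dotProduct_add, e1, e2] at h0
      linarith
    have habsB : |w ⬝ᵥ (B T) *ᵥ w| ≤ c * q := hBq T hT01 w
    have hφT : φ T = ε * Real.exp (Cc * (T - t₀)) := rfl
    have hg'_pos : 0 < g' := by
      rw [hg'_def]
      have h1 : 2 * (φ T) * (w ⬝ᵥ (B T) *ᵥ w) ≥ -(2 * (φ T) * (c * q)) := by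
        have h2 := (abs_le.mp habsB).1
        have hφ := (hφpos T).le
        nlinarith
      have h3 : (ε * (Real.exp (Cc * (T - t₀)) * Cc)) * q = φ T * Cc * q := by
        rw [hφT]; ring
      rw [h3]
      have h4 : φ T * Cc * q - 2 * (φ T) * (c * q) = φ T * q := by rw [hCc_def]; ring
      have hφq : 0 < φ T * q := mul_pos (hφpos T) hq_pos
      nlinarith [hF'w, h1]
    linarith
  -- conclude
  intro t ht
  refine Matrix.PosSemidef.of_dotProduct_mulVec_nonneg ?_ ?_
  · rw [Matrix.IsHermitian, Matrix.conjTranspose_eq_transpose_of_trivial]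
    exact (hsymm t (hsub ht)).eq
  · intro x
    rw [star_trivial]
    show (0:ℝ) ≤ x ⬝ᵥ (F t) *ᵥ x
    by_contra hneg
    push_neg at hneg
    set Q : ℝ := x ⬝ᵥ (F t) *ᵥ x with hQ_def
    set c₁ : ℝ := Real.exp (Cc * (t - t₀)) * (x ⬝ᵥ x) with hc₁_def
    have hc₁_nn : 0 ≤ c₁ := mul_nonneg (Real.exp_pos _).le (hdp_nonneg x)
    rcases hc₁_nn.lt_or_eq with hc₁_pos | hc₁_zero
    · have hne : c₁ ≠ 0 := hc₁_pos.ne'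
      have hK := KEY (-Q / (2 * c₁)) (div_pos (neg_pos.mpr hneg) (by linarith)) t ht x
      rw [← hQ_def] at hK
      have e1 : (-Q / (2 * c₁) * Real.exp (Cc * (t - t₀))) * (x ⬝ᵥ x)
          = (-Q / (2 * c₁)) * c₁ := by rw [hc₁_def]; ring
      have e2 : (-Q / (2 * c₁)) * c₁ = -Q / 2 := by
        field_simp
      rw [e1, e2] at hK
      linarith
    · have hK := KEY 1 one_pos t ht x
      rw [← hQ_def] at hK
      have hz : Real.exp (Cc * (t - t₀)) * (x ⬝ᵥ x) = 0 := hc₁_zero.symm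
      nlinarith [hK]
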